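/- Let A = ({a,b}, Q, δ) be a completely reachable semi-automaton with n states where a has rank n-1 and b induces an n-cycle on Q. If there is a state q ∈ Q such that δ(q, b^{m+1} a) = δ(q, a b^m) for all 0 ≤ m ≤ ⌊n/2⌋ - 1, then the state complexity of the set of synchronizing words of A equals 2^n - n. -/

import Mathlib

open Finset

universe u v

variable {Q : Type u} {A : Type v}

/-- Extended transition function on words (lists of letters). -/
def dw (δ : Q → A → Q) (q : Q) (w : List A) : Q := w.foldl δ q

/-- A subset `S` of the state set is reachable if it is the image of the
full state set under some word. -/
def reach [Fintype Q] [DecidableEq Q] (δ : Q → A → Q) (S : Finset Q) : Prop :=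
  ∃ w : List A, Finset.univ.image (fun q => dw δ q w) = S

/-- Rank of a word: cardinality of the image of the state set under it. -/
def rkw [Fintype Q] [DecidableEq Q] (δ : Q → A → Q) (w : List A) : ℕ :=
  (Finset.univ.image (fun q => dw δ q w)).card

/-- Rank of a letter. -/
def rkl [Fintype Q] [DecidableEq Q] (δ : Q → A → Q) (a : A) : ℕ :=
  (Finset.univ.image (fun q => δ q a)).card

/-- A map is a cyclic permutation with a single orbit. -/
def isCyclicPerm (f : Q → Q) : Prop :=
  Function.Bijective f ∧ ∀ p q : Q, ∃ k : ℕ, f^[k] p = q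

/-- Two subsets of states are distinguishable in the power automaton:
some word maps exactly one of them to a singleton. -/
def distinguishable [DecidableEq Q] (δ : Q → A → Q) (S T : Finset Q) : Prop :=
  ∃ u : List A,
    Xor' ((S.image (fun q => dw δ q u)).card = 1)
         ((T.image (fun q => dw δ q u)).card = 1)

/-- The set of synchronizing words. -/
def Syn [Fintype Q] [DecidableEq Q] (δ : Q → A → Q) : Set (List A) :=
  {w | (Finset.univ.image (fun q => dw δ q w)).card = 1}

/-- The Nerode right-congruence of a language. -/
def nerode (L : Set (List A)) : Setoid (List A) where
  r u v := ∀ x : List A, u ++ x ∈ L ↔ v ++ x ∈ L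
  iseqv := ⟨fun _ _ => Iff.rfl, fun h x => (h x).symm, fun h1 h2 x => (h1 x).trans (h2 x)⟩

/-- State complexity of a language: number of Nerode classes. -/
noncomputable def sc (L : Set (List A)) : ℕ := Nat.card (Quotient (nerode L))

/-- Complete reachability. -/
def complReach [Fintype Q] [DecidableEq Q] (δ : Q → A → Q) : Prop :=
  ∀ S : Finset Q, S.Nonempty → ∃ w : List A, Finset.univ.image (fun q => dw δ q w) = S

/-- The permutation group generated by the permutational letters. -/
def permGroup [Fintype Q] [DecidableEq Q] (δ : Q → A → Q) : Subgroup (Equiv.Perm Q) :=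
  Subgroup.closure {π : Equiv.Perm Q | ∃ a : A, ∀ q : Q, π q = δ q a}

set_option linter.unusedSectionVars false

section Aux

variable [Fintype Q] [DecidableEq Q] (δ : Q → Bool → Q)

private def aimg (S : Finset Q) (w : List Bool) : Finset Q :=
  S.image (fun q => dw δ q w)

private lemma dw_cons (x : Q) (ℓ : Bool) (v : List Bool) :
    dw δ x (ℓ :: v) = dw δ (δ x ℓ) v := rfl

private lemma aimg_append (S : Finset Q) (u v : List Bool) :
    aimg δ S (u ++ v) = aimg δ (aimg δ S u) v := by
  unfold aimg
  rw [Finset.image_image]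
  apply Finset.image_congr
  intro x _
  simp [dw, Function.comp, List.foldl_append]

private lemma aimg_nil (S : Finset Q) : aimg δ S [] = S := by
  simp [aimg, dw]

private lemma aimg_card_one_of_card_one (S : Finset Q) (hS : S.card = 1) (w : List Bool) :
    (aimg δ S w).card = 1 := by
  obtain ⟨s, rfl⟩ := Finset.card_eq_one.mp hS
  simp [aimg]

/-- lower bound for preimage cardinality under a map of corank ≤ 1 -/
private lemma preimage_card_lb (f : Q → Q)
    (hf : Fintype.card Q ≤ (Finset.univ.image f).card + 1) (T : Finset Q) :
    T.card ≤ (Finset.univ.filter (fun x => f x ∈ T)).card + 1 := by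
  set A := Finset.univ.filter (fun x => f x ∈ T) with hA
  set Im := Finset.univ.image f with hIm
  have h1 : T ∩ Im ⊆ A.image f := by
    intro t ht
    rw [Finset.mem_inter] at ht
    obtain ⟨s, _, rfl⟩ := Finset.mem_image.mp ht.2
    exact Finset.mem_image.mpr ⟨s, Finset.mem_filter.mpr ⟨Finset.mem_univ s, ht.1⟩, rfl⟩
  have h2 : (T ∩ Im).card ≤ A.card :=
    le_trans (Finset.card_le_card h1) (Finset.card_image_le)
  have h3 : (T ∩ Im).card + (T \ Im).card = T.card := Finset.card_inter_add_card_sdiff T Im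
  have h4 : (T \ Im).card ≤ (Finset.univ \ Im).card :=
    Finset.card_le_card (Finset.sdiff_subset_sdiff (Finset.subset_univ T) (le_refl Im))
  have h5 : (Finset.univ \ Im).card = Fintype.card Q - Im.card := by
    rw [Finset.card_sdiff_of_subset (Finset.subset_univ Im), Finset.card_univ]
  have h6 : Im.card ≤ Fintype.card Q := Finset.card_le_univ Im
  omega

/-- upper bound -/
private lemma preimage_card_ub (f : Q → Q)
    (hf : Fintype.card Q ≤ (Finset.univ.image f).card + 1) (T : Finset Q) :
    (Finset.univ.filter (fun x => f x ∈ T)).card ≤ T.card + 1 := by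
  have hlb := preimage_card_lb f hf (Finset.univ \ T)
  have hsplit : (Finset.univ.filter (fun x => f x ∈ T)).card
      + (Finset.univ.filter (fun x => ¬ f x ∈ T)).card = Fintype.card Q := by
    rw [Finset.card_filter_add_card_filter_not, Finset.card_univ]
  have he : Finset.univ.filter (fun x => f x ∈ Finset.univ \ T)
      = Finset.univ.filter (fun x => ¬ f x ∈ T) := by
    apply Finset.filter_congr
    intro x _
    simp
  rw [he] at hlb
  have h5 : (Finset.univ \ T).card = Fintype.card Q - T.card := by
    rw [Finset.card_sdiff_of_subset (Finset.subset_univ T), Finset.card_univ]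
  have h6 : T.card ≤ Fintype.card Q := Finset.card_le_univ T
  omega

private def afib (v : List Bool) (c : Q) : Finset Q :=
  Finset.univ.filter (fun x => dw δ x v = c)

private lemma afib_nil (c : Q) : afib δ [] c = {c} := by
  ext x; simp [afib, dw]
  exact Finset.mem_filter.trans (and_iff_right (Finset.mem_univ _))

private lemma afib_cons (ℓ : Bool) (v : List Bool) (c : Q) :
    afib δ (ℓ :: v) c = Finset.univ.filter (fun x => δ x ℓ ∈ afib δ v c) := by
  ext x; simp [afib, dw_cons]
  exact Finset.mem_filter.trans (and_iff_right (Finset.mem_univ _))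


private lemma dw_replicate_true (x : Q) (k : ℕ) :
    dw δ x (List.replicate k true) = (fun z => δ z true)^[k] x := by
  induction k generalizing x with
  | zero => rfl
  | succ k ih =>
      rw [List.replicate_succ, dw_cons, ih, Function.iterate_succ_apply]

/-- discrete IVT along suffix fibers -/
private lemma exists_fib_card (c : Q)
    (hL : ∀ ℓ : Bool, Fintype.card Q ≤ (Finset.univ.image (fun x => δ x ℓ)).card + 1) :
    ∀ (u : List Bool) (m : ℕ), 1 ≤ m → m ≤ (afib δ u c).card →
      ∃ v : List Bool, (afib δ v c).card = m := by
  intro u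
  induction u with
  | nil =>
      intro m h1 h2
      rw [afib_nil, Finset.card_singleton] at h2
      exact ⟨[], by rw [afib_nil, Finset.card_singleton]; omega⟩
  | cons ℓ u ih =>
      intro m h1 h2
      by_cases hm : m ≤ (afib δ u c).card
      · exact ih m h1 hm
      · have hub : (afib δ (ℓ :: u) c).card ≤ (afib δ u c).card + 1 := by
          rw [afib_cons]
          exact preimage_card_ub (fun x => δ x ℓ) (hL ℓ) (afib δ u c)
        exact ⟨ℓ :: u, by omega⟩

/-- separation lemma: synchronize S while keeping y apart -/
private lemma sep (n : ℕ) (hn : Fintype.card Q = n)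
    (hcr : ∀ S : Finset Q, S.Nonempty →
      ∃ w : List Bool, Finset.univ.image (fun q => dw δ q w) = S)
    (hL : ∀ ℓ : Bool, Fintype.card Q ≤ (Finset.univ.image (fun x => δ x ℓ)).card + 1)
    (hcyc : ∀ p r : Q, ∃ k : ℕ, (fun z => δ z true)^[k] p = r)
    (hbij : Function.Bijective (fun z => δ z true))
    (S : Finset Q) (hS : S.Nonempty) (y : Q) (hy : y ∉ S) :
    ∃ (w : List Bool) (c : Q), aimg δ S w = {c} ∧ dw δ y w ≠ c := by
  obtain ⟨u, hu⟩ := hcr {y} (Finset.singleton_nonempty y)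
  have hsync : ∀ x : Q, dw δ x u = y := by
    intro x
    have : dw δ x u ∈ Finset.univ.image (fun q => dw δ q u) :=
      Finset.mem_image_of_mem _ (Finset.mem_univ x)
    rw [hu] at this
    exact Finset.mem_singleton.mp this
  have hfibu : afib δ u y = Finset.univ := by
    ext x; simp [afib, hsync x]
  -- n ≥ 2
  obtain ⟨s0, hs0⟩ := hS
  have hins : (insert y S).card = S.card + 1 := Finset.card_insert_of_notMem hy
  have hcard1 : 1 ≤ S.card := Finset.card_pos.mpr ⟨s0, hs0⟩
  have hle : (insert y S).card ≤ n := by rw [← hn]; exact Finset.card_le_univ _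
  have hn2 : 2 ≤ n := by omega
  obtain ⟨v, hv⟩ := exists_fib_card δ y hL u (n - 1) (by omega)
    (by rw [hfibu, Finset.card_univ, hn]; omega)
  -- the missing point
  have hsd : (Finset.univ \ afib δ v y).card = 1 := by
    rw [Finset.card_sdiff_of_subset (Finset.subset_univ _), Finset.card_univ, hn, hv]
    omega
  obtain ⟨ym, hym⟩ := Finset.card_eq_one.mp hsd
  have hym_not : ym ∉ afib δ v y := by
    have : ym ∈ Finset.univ \ afib δ v y := by rw [hym]; exact Finset.mem_singleton_self ym
    exact (Finset.mem_sdiff.mp this).2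
  have hmem : ∀ x : Q, x ≠ ym → x ∈ afib δ v y := by
    intro x hx
    by_contra hxn
    have : x ∈ Finset.univ \ afib δ v y := Finset.mem_sdiff.mpr ⟨Finset.mem_univ x, hxn⟩
    rw [hym, Finset.mem_singleton] at this
    exact hx this
  obtain ⟨k, hk⟩ := hcyc y ym
  refine ⟨List.replicate k true ++ v, y, ?_, ?_⟩
  · have hmap : ∀ s ∈ S, dw δ s (List.replicate k true ++ v) = y := by
      intro s hs
      have h1 : dw δ s (List.replicate k true ++ v) = dw δ (dw δ s (List.replicate k true)) v := by
        simp [dw, List.foldl_append]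
      rw [h1, dw_replicate_true]
      have hne : (fun z => δ z true)^[k] s ≠ ym := by
        rw [← hk]
        intro hcon
        exact hy (((hbij.iterate k).injective hcon) ▸ hs)
      have := hmem _ hne
      simp only [afib, Finset.mem_filter] at this
      exact this.2
    ext z
    simp only [aimg, Finset.mem_image, Finset.mem_singleton]
    constructor
    · rintro ⟨s, hs, rfl⟩; exact hmap s hs
    · rintro rfl; exact ⟨s0, hs0, hmap s0 hs0⟩
  · have : dw δ y (List.replicate k true ++ v) = dw δ ym v := by
      simp [dw, List.foldl_append]
      rw [show List.foldl δ y (List.replicate k true) = dw δ y (List.replicate k true) from rfl,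
        dw_replicate_true, hk]
    rw [this]
    intro hcon
    exact hym_not (by simp [afib, hcon])


/-- asymmetric distinguishability -/
private lemma half (n : ℕ) (hn : Fintype.card Q = n)
    (hcr : ∀ S : Finset Q, S.Nonempty →
      ∃ w : List Bool, Finset.univ.image (fun q => dw δ q w) = S)
    (hL : ∀ ℓ : Bool, Fintype.card Q ≤ (Finset.univ.image (fun x => δ x ℓ)).card + 1)
    (hcyc : ∀ p r : Q, ∃ k : ℕ, (fun z => δ z true)^[k] p = r)
    (hbij : Function.Bijective (fun z => δ z true))
    (S T : Finset Q) (hS : S.Nonempty) (hT2 : 2 ≤ T.card)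
    (t : Q) (htT : t ∈ T) (htS : t ∉ S) :
    ∃ w, (aimg δ S w).card = 1 ∧ 2 ≤ (aimg δ T w).card := by
  obtain ⟨t', ht'T, ht'⟩ := Finset.exists_mem_ne (s := T) (by omega) t
  have htS' : t ∉ insert t' S := by
    rw [Finset.mem_insert]
    rintro (rfl | hc)
    · exact ht' rfl
    · exact htS hc
  obtain ⟨w, c, himg, hyw⟩ := sep δ n hn hcr hL hcyc hbij (insert t' S)
    ⟨t', Finset.mem_insert_self t' S⟩ t htS'
  refine ⟨w, ?_, ?_⟩
  · have hsub : aimg δ S w ⊆ {c} := by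
      rw [← himg]
      exact Finset.image_subset_image (Finset.subset_insert t' S)
    obtain ⟨z, hz⟩ := hS.image (fun q => dw δ q w)
    have : aimg δ S w = {c} :=
      Finset.eq_singleton_iff_nonempty_unique_mem.mpr
        ⟨⟨z, hz⟩, fun x hx => Finset.mem_singleton.mp (hsub hx)⟩
    rw [this, Finset.card_singleton]
  · have hc1 : dw δ t' w = c := by
      have : dw δ t' w ∈ aimg δ (insert t' S) w :=
        Finset.mem_image_of_mem _ (Finset.mem_insert_self t' S)
      rw [himg] at this
      exact Finset.mem_singleton.mp this
    apply Finset.one_lt_card.mpr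
    exact ⟨dw δ t' w, Finset.mem_image_of_mem _ ht'T,
      dw δ t w, Finset.mem_image_of_mem _ htT, by rw [hc1]; exact fun hc => hyw hc.symm⟩

/-- behavioural equality implies set equality (or both singletons) -/
private lemma behEq (n : ℕ) (hn : Fintype.card Q = n)
    (hcr : ∀ S : Finset Q, S.Nonempty →
      ∃ w : List Bool, Finset.univ.image (fun q => dw δ q w) = S)
    (hL : ∀ ℓ : Bool, Fintype.card Q ≤ (Finset.univ.image (fun x => δ x ℓ)).card + 1)
    (hcyc : ∀ p r : Q, ∃ k : ℕ, (fun z => δ z true)^[k] p = r)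
    (hbij : Function.Bijective (fun z => δ z true))
    (S T : Finset Q) (hS : S.Nonempty) (hT : T.Nonempty)
    (hbeh : ∀ x : List Bool, (aimg δ S x).card = 1 ↔ (aimg δ T x).card = 1) :
    S = T ∨ (S.card = 1 ∧ T.card = 1) := by
  have hnil := hbeh []
  rw [aimg_nil, aimg_nil] at hnil
  by_cases cS : S.card = 1
  · right
    exact ⟨cS, hnil.mp cS⟩
  · by_cases cT : T.card = 1
    · exact absurd (hnil.mpr cT) cS
    · left
      by_contra hne
      have hS2 : 2 ≤ S.card := by
        have := Finset.card_pos.mpr hS; omega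
      have hT2 : 2 ≤ T.card := by
        have := Finset.card_pos.mpr hT; omega
      by_cases hsub : T ⊆ S
      · have hns : ¬ S ⊆ T := fun h => hne (Finset.Subset.antisymm h hsub)
        obtain ⟨s, hsS, hsT⟩ := Finset.not_subset.mp hns
        obtain ⟨w, hw1, hw2⟩ := half δ n hn hcr hL hcyc hbij T S hT hS2 s hsS hsT
        have := (hbeh w).mpr hw1
        omega
      · obtain ⟨t, htT, htS⟩ := Finset.not_subset.mp hsub
        obtain ⟨w, hw1, hw2⟩ := half δ n hn hcr hL hcyc hbij S T hS hT2 t htT htS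
        have := (hbeh w).mp hw1
        omega


end Aux

theorem sc_syn_max_of_half_shift [Fintype Q] [DecidableEq Q]
    (δ : Q → Bool → Q) (n : ℕ) (hn : Fintype.card Q = n)
    (hcr : complReach δ)
    (ha : rkl δ false = n - 1)
    (hb : isCyclicPerm (fun q => δ q true))
    (q : Q)
    (h : ∀ m : ℕ, m ≤ n / 2 - 1 →
      dw δ q (List.replicate (m + 1) true ++ [false]) =
        dw δ q (false :: List.replicate m true)) :
    sc (Syn δ) = 2 ^ n - n := by
  by_cases hn0 : n = 0
  · -- empty state set
    subst hn0
    have hempty : IsEmpty Q := Fintype.card_eq_zero_iff.mp hn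
    have hsyn : ∀ w : List Bool, w ∉ Syn δ := by
      intro w hw
      have huniv : (Finset.univ : Finset Q) = ∅ := Finset.univ_eq_empty
      simp only [Syn, Set.mem_setOf_eq, huniv, Finset.image_empty, Finset.card_empty] at hw
      omega
    have hsub : Subsingleton (Quotient (nerode (Syn δ))) := by
      constructor
      intro a b
      obtain ⟨u, rfl⟩ := Quotient.exists_rep a
      obtain ⟨v, rfl⟩ := Quotient.exists_rep b
      exact Quotient.sound (fun x => iff_of_false (hsyn _) (hsyn _))
    show Nat.card (Quotient (nerode (Syn δ))) = 2 ^ 0 - 0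
    rw [Nat.card_eq_one_iff_unique.mpr ⟨hsub, ⟨Quotient.mk _ []⟩⟩]
    norm_num
  · -- main case : n ≥ 1
    have hn1 : 1 ≤ n := by omega
    have hQne : Nonempty Q := ⟨q⟩
    set b : Q → Q := fun z => δ z true with hbdef
    have hbij : Function.Bijective b := hb.1
    have hcyc : ∀ p r : Q, ∃ k : ℕ, b^[k] p = r := hb.2
    have hL : ∀ ℓ : Bool, Fintype.card Q ≤ (Finset.univ.image (fun x => δ x ℓ)).card + 1 := by
      intro ℓ
      cases ℓ
      · have : (Finset.univ.image (fun x => δ x false)).card = n - 1 := ha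
        omega
      · have : Finset.univ.image (fun x => δ x true) = Finset.univ :=
          Finset.image_univ_of_surjective hbij.surjective
        rw [this, Finset.card_univ]
        omega
    have q0 : Q := q
    set φ : List Bool → Finset Q := fun u => Finset.univ.image (fun w => dw δ w u) with hφ
    have hφaimg : ∀ u, aimg δ Finset.univ u = φ u := fun u => rfl
    have hφne : ∀ u, (φ u).Nonempty := fun u =>
      (Finset.univ_nonempty_iff.mpr hQne).image _
    set g' : List Bool → Finset Q :=
      fun u => if (φ u).card = 1 then {q0} else φ u with hg'
    set F : Finset (Finset Q) :=
      insert {q0} (Finset.univ.filter fun S : Finset Q => 2 ≤ S.card) with hF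
    have hmemF : ∀ u, g' u ∈ F := by
      intro u
      simp only [hg']
      by_cases hc : (φ u).card = 1
      · rw [if_pos hc]; exact Finset.mem_insert_self _ _
      · rw [if_neg hc]
        refine Finset.mem_insert_of_mem (Finset.mem_filter.mpr ⟨Finset.mem_univ _, ?_⟩)
        have := Finset.card_pos.mpr (hφne u)
        omega
    have hκ : ∀ (u x : List Bool), (u ++ x ∈ Syn δ) ↔ ((aimg δ (φ u) x).card = 1) := by
      intro u x
      have : Finset.univ.image (fun w => dw δ w (u ++ x)) = aimg δ (φ u) x :=
        aimg_append δ Finset.univ u x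
      show (Finset.univ.image (fun w => dw δ w (u ++ x))).card = 1 ↔ _
      rw [this]
    have compat : ∀ u v : List Bool, (nerode (Syn δ)).r u v → g' u = g' v := by
      intro u v hr
      have hbeh : ∀ x : List Bool, (aimg δ (φ u) x).card = 1 ↔ (aimg δ (φ v) x).card = 1 :=
        fun x => (hκ u x).symm.trans ((hr x).trans (hκ v x))
      rcases behEq δ n hn hcr hL hcyc hbij (φ u) (φ v) (hφne u) (hφne v) hbeh with
        heq | ⟨h1, h2⟩
      · simp only [hg', heq]
      · simp only [hg']; rw [if_pos h1, if_pos h2]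
    set e : Quotient (nerode (Syn δ)) → {S : Finset Q // S ∈ F} :=
      Quotient.lift (fun u => (⟨g' u, hmemF u⟩ : {S : Finset Q // S ∈ F}))
        (fun u v hr => Subtype.ext (compat u v hr)) with he
    have hinj : Function.Injective e := by
      intro z1 z2 hz
      obtain ⟨u, rfl⟩ := Quotient.exists_rep z1
      obtain ⟨v, rfl⟩ := Quotient.exists_rep z2
      have hg : g' u = g' v := congrArg Subtype.val hz
      apply Quotient.sound
      intro x
      rw [hκ u x, hκ v x]
      by_cases c1 : (φ u).card = 1 <;> by_cases c2 : (φ v).card = 1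
      · exact iff_of_true (aimg_card_one_of_card_one δ _ c1 x)
          (aimg_card_one_of_card_one δ _ c2 x)
      · exfalso
        simp only [hg'] at hg
        rw [if_pos c1, if_neg c2] at hg
        exact c2 (by rw [← hg, Finset.card_singleton])
      · exfalso
        simp only [hg'] at hg
        rw [if_neg c1, if_pos c2] at hg
        exact c1 (by rw [hg, Finset.card_singleton])
      · simp only [hg'] at hg
        rw [if_neg c1, if_neg c2] at hg
        rw [hg]
    have hsurj : Function.Surjective e := by
      rintro ⟨S, hSF⟩
      rcases Finset.mem_insert.mp hSF with hS1 | hfil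
      · obtain ⟨w, hw⟩ := hcr {q0} (Finset.singleton_nonempty _)
        refine ⟨Quotient.mk _ w, Subtype.ext ?_⟩
        have hφw : φ w = {q0} := hw
        show g' w = S
        simp only [hg']
        rw [hφw, hS1]
        simp
      · have hS2 : 2 ≤ S.card := (Finset.mem_filter.mp hfil).2
        obtain ⟨w, hw⟩ := hcr S (Finset.card_pos.mp (by omega))
        refine ⟨Quotient.mk _ w, Subtype.ext ?_⟩
        have hφw : φ w = S := hw
        show g' w = S
        simp only [hg']
        rw [hφw, if_neg (by omega)]
    have hcardq : Nat.card (Quotient (nerode (Syn δ))) = F.card := by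
      rw [Nat.card_congr (Equiv.ofBijective e ⟨hinj, hsurj⟩), Nat.card_eq_fintype_card,
        Fintype.card_coe]
    -- counting F
    have hsplit := Finset.card_filter_add_card_filter_not
      (s := (Finset.univ : Finset (Finset Q))) (fun S : Finset Q => 2 ≤ S.card)
    have hforms : Finset.univ.filter (fun S : Finset Q => ¬ 2 ≤ S.card)
        = insert (∅ : Finset Q) (Finset.univ.image fun x : Q => ({x} : Finset Q)) := by
      ext S
      constructor
      · intro hS
        have hcard : S.card ≤ 1 := by
          have := (Finset.mem_filter.mp hS).2
          omega
        rcases Nat.le_one_iff_eq_zero_or_eq_one.mp hcard with h0 | h1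
        · rw [Finset.mem_insert]; exact Or.inl (Finset.card_eq_zero.mp h0)
        · obtain ⟨a, rfl⟩ := Finset.card_eq_one.mp h1
          exact Finset.mem_insert_of_mem (Finset.mem_image_of_mem _ (Finset.mem_univ a))
      · intro hS
        rcases Finset.mem_insert.mp hS with rfl | him
        · simp
        · obtain ⟨a, -, rfl⟩ := Finset.mem_image.mp him
          simp
    have hnotmem : (∅ : Finset Q) ∉ (Finset.univ.image fun x : Q => ({x} : Finset Q)) := by
      simp only [Finset.mem_image]
      rintro ⟨x, -, hx⟩
      exact (Finset.singleton_ne_empty x) hx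
    have hsing : (Finset.univ.image fun x : Q => ({x} : Finset Q)).card = n := by
      rw [Finset.card_image_of_injective _ Finset.singleton_injective, Finset.card_univ, hn]
    have hcardlow : (Finset.univ.filter (fun S : Finset Q => ¬ 2 ≤ S.card)).card = n + 1 := by
      rw [hforms, Finset.card_insert_of_notMem hnotmem, hsing]
    have huniv2 : (Finset.univ : Finset (Finset Q)).card = 2 ^ n := by
      rw [Finset.card_univ, Fintype.card_finset, hn]
    have hq0F : ({q0} : Finset Q) ∉ (Finset.univ.filter fun S : Finset Q => 2 ≤ S.card) := by
      simp
    have hFcard : F.card = (Finset.univ.filter fun S : Finset Q => 2 ≤ S.card).card + 1 := by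
      rw [hF, Finset.card_insert_of_notMem hq0F]
    have hpow : n < 2 ^ n := Nat.lt_two_pow_self (n := n)
    show Nat.card (Quotient (nerode (Syn δ))) = 2 ^ n - n
    rw [hcardq]
    omega
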